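/- For any multigraph G (no loops), the chromatic index χ'(G) satisfies Δ(G) ≤ χ'(G) ≤ Δ(G) + μ(G), where Δ is the maximum degree and μ is the maximum edge multiplicity. -/

import Mathlib

/-- A multigraph on vertex type `V` with edge type `E`: each edge has two distinct
endpoints (no loops), possibly with parallel edges. -/
structure Multigraph (V : Type*) (E : Type*) where
  ends : E → Sym2 V
  not_loop : ∀ e, ¬ (ends e).IsDiag

namespace Multigraph

variable {V E : Type*}

/-- Two edges are adjacent if they are distinct and share an endpoint. -/
def Adjacent (G : Multigraph V E) (f g : E) : Prop :=
  f ≠ g ∧ ∃ v, v ∈ G.ends f ∧ v ∈ G.ends g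

/-- A proper `k`-edge-coloring of the subgraph of `G` with edge set `F`. -/
def IsProperColoringOn (G : Multigraph V E) (F : Set E) (k : ℕ) (φ : E → Fin k) : Prop :=
  ∀ f ∈ F, ∀ g ∈ F, G.Adjacent f g → φ f ≠ φ g

/-- A proper `k`-edge-coloring of `G`. -/
def IsProperColoring (G : Multigraph V E) (k : ℕ) (φ : E → Fin k) : Prop :=
  G.IsProperColoringOn Set.univ k φ

/-- A proper `k`-edge-coloring of `G - e`. -/
def IsProperColoringOff (G : Multigraph V E) (e : E) (k : ℕ) (φ : E → Fin k) : Prop :=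
  G.IsProperColoringOn {e}ᶜ k φ

/-- The chromatic index of the subgraph with edge set `F`. -/
noncomputable def chromaticIndexOn (G : Multigraph V E) (F : Set E) : ℕ :=
  sInf {k | ∃ φ : E → Fin k, G.IsProperColoringOn F k φ}

/-- The chromatic index `χ'(G)`. -/
noncomputable def chromaticIndex (G : Multigraph V E) : ℕ :=
  G.chromaticIndexOn Set.univ

/-- The degree of a vertex. -/
noncomputable def degree (G : Multigraph V E) (v : V) : ℕ :=
  {e | v ∈ G.ends e}.ncard

/-- The maximum degree `Δ(G)`. -/
noncomputable def maxDegree (G : Multigraph V E) : ℕ :=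
  sSup (Set.range G.degree)

/-- The multiplicity `μ(G)`: the maximum number of parallel edges between two vertices. -/
noncomputable def multiplicity (G : Multigraph V E) : ℕ :=
  sSup (Set.range (fun p : V × V => {e | G.ends e = s(p.1, p.2)}.ncard))

/-- A set of edges is a matching if no two distinct members share a vertex. -/
def IsMatching (G : Multigraph V E) (M : Finset E) : Prop :=
  ∀ f ∈ M, ∀ g ∈ M, f ≠ g → ¬ ∃ v, v ∈ G.ends f ∧ v ∈ G.ends g

/-- A fractional edge coloring: a nonnegative weighting of matchings such that every
edge receives total weight exactly `1`. -/
def IsFracColoring [Fintype E] [DecidableEq E] (G : Multigraph V E) (w : Finset E → ℝ) : Prop :=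
  (∀ M, 0 ≤ w M) ∧ (∀ M, w M ≠ 0 → G.IsMatching M) ∧
    (∀ e : E, ∑ M : Finset E, (if e ∈ M then w M else 0) = 1)

/-- The fractional chromatic index `χ'_f(G)`. -/
noncomputable def fracChromaticIndex [Fintype E] [DecidableEq E] (G : Multigraph V E) : ℝ :=
  sInf {x : ℝ | ∃ w, G.IsFracColoring w ∧ ∑ M : Finset E, w M = x}

/-- Color `c` is missing at `v` under the coloring `φ` of `G - e`. -/
def MissingAt (G : Multigraph V E) (e : E) {k : ℕ} (φ : E → Fin k) (v : V) (c : Fin k) : Prop :=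
  ∀ f, f ≠ e → v ∈ G.ends f → φ f ≠ c

/-- `X` is elementary w.r.t. `φ`: the missing color sets of distinct vertices of `X`
are pairwise disjoint. -/
def IsElementary (G : Multigraph V E) (e : E) {k : ℕ} (φ : E → Fin k) (X : Set V) : Prop :=
  ∀ x ∈ X, ∀ y ∈ X, x ≠ y → ∀ c, G.MissingAt e φ x c → ¬ G.MissingAt e φ y c

/-- An edge with exactly one end in `X`. -/
def IsBoundaryEdge (G : Multigraph V E) (X : Set V) (f : E) : Prop :=
  (∃ v ∈ G.ends f, v ∈ X) ∧ (∃ v ∈ G.ends f, v ∉ X)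

/-- `X` is closed w.r.t. `φ`: no color missing at a vertex of `X` appears on a
boundary edge of `X`. -/
def IsClosed (G : Multigraph V E) (e : E) {k : ℕ} (φ : E → Fin k) (X : Set V) : Prop :=
  ∀ f, f ≠ e → G.IsBoundaryEdge X f → ∀ u ∈ X, ¬ G.MissingAt e φ u (φ f)

/-- `X` is strongly closed: closed, and every color appears on at most one boundary edge. -/
def IsStronglyClosed (G : Multigraph V E) (e : E) {k : ℕ} (φ : E → Fin k) (X : Set V) : Prop :=
  G.IsClosed e φ X ∧
    ∀ f g, f ≠ e → g ≠ e → G.IsBoundaryEdge X f → G.IsBoundaryEdge X g →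
      φ f = φ g → f = g

/-- The vertex set spanned by the first `j` edges of the sequence `t`. -/
def TSet (G : Multigraph V E) (t : ℕ → E) (j : ℕ) : Set V :=
  {v | ∃ i < j, v ∈ G.ends (t i)}

/-- `t 0, …, t (p-1)` is a Tashkinov tree of `(G, e, φ)`: it starts with `e`, and each
subsequent edge is a boundary edge of the tree built so far whose color is missing at
some vertex of that tree. -/
def IsTashkinov (G : Multigraph V E) (e : E) {k : ℕ} (φ : E → Fin k) (p : ℕ) (t : ℕ → E) : Prop :=
  0 < p ∧ t 0 = e ∧
    ∀ i, 1 ≤ i → i < p →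
      t i ≠ e ∧ G.IsBoundaryEdge (G.TSet t i) (t i) ∧
        ∃ u ∈ G.TSet t i, G.MissingAt e φ u (φ (t i))

/-- The set of colors used on the (colored) edges of the tree. -/
def usedColors (G : Multigraph V E) (e : E) {k : ℕ} (φ : E → Fin k) (p : ℕ) (t : ℕ → E) :
    Set (Fin k) :=
  {c | ∃ i < p, t i ≠ e ∧ φ (t i) = c}

/-- The free colors of the tree: colors missing at some vertex of the tree and not
used on any edge of the tree. -/
def freeColors (G : Multigraph V E) (e : E) {k : ℕ} (φ : E → Fin k) (p : ℕ) (t : ℕ → E) :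
    Set (Fin k) :=
  {c | (∃ u ∈ G.TSet t p, G.MissingAt e φ u c) ∧ c ∉ G.usedColors e φ p t}

/-- The Tashkinov tree `t` is `e`-maximal: no Tashkinov tree of `(G, e, φ*)`, for any
proper `k`-edge-coloring `φ*` of `G - e`, properly contains it. -/
def IsEMaximal (G : Multigraph V E) (e : E) (k : ℕ) (p : ℕ) (t : ℕ → E) : Prop :=
  ¬ ∃ (φ' : E → Fin k) (p' : ℕ) (t' : ℕ → E),
      G.IsProperColoringOff e k φ' ∧ G.IsTashkinov e φ' p' t' ∧
      {f | ∃ i < p, t i = f} ⊂ {f | ∃ j < p', t' j = f}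

/-- `t` is a balanced Tashkinov tree with trunk of `h` vertices: the first `h - 1`
edges form a path whose first edge is `e` and whose colored edges alternate between a
color `α` missing at one end of `e` and a color `β` missing at the other end, and the
remaining edges are added in pairs with equal colors. -/
def IsBalanced (G : Multigraph V E) (e : E) {k : ℕ} (φ : E → Fin k) (p : ℕ) (t : ℕ → E)
    (h : ℕ) : Prop :=
  2 ≤ h ∧ h ≤ p + 1 ∧ (p - (h - 1)) % 2 = 0 ∧
  (∃ (v : ℕ → V) (α β : Fin k),
    (∀ i j, i < h → j < h → v i = v j → i = j) ∧
    (∀ i, i < h - 1 → G.ends (t i) = s(v i, v (i + 1))) ∧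
    G.MissingAt e φ (v 1) α ∧ G.MissingAt e φ (v 0) β ∧
    (∀ i, 1 ≤ i → i < h - 1 → φ (t i) = if i % 2 = 1 then α else β)) ∧
  (∀ j, h - 1 ≤ j → j < p → (j - (h - 1)) % 2 = 0 →
    j + 1 < p ∧ φ (t j) = φ (t (j + 1)))

end Multigraph

section VizingAux

open Finset

attribute [local instance] Classical.propDecidable

namespace Multigraph

variable {V E : Type*} [Fintype V] [Fintype E]

/-- `c` is missing at `v` for the coloring `φ` on `F`, ignoring the edge `excl`. -/
def Miss (G : Multigraph V E) (F : Finset E) (excl : E) {k : ℕ} (φ : E → Fin k)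
    (v : V) (c : Fin k) : Prop :=
  ∀ f ∈ F, f ≠ excl → v ∈ G.ends f → φ f ≠ c

variable {G : Multigraph V E}

lemma ends_eq_of_mem {x : V} {f : E} (h : x ∈ G.ends f) :
    ∃ w, w ≠ x ∧ G.ends f = s(x, w) := by
  classical
  refine ⟨Sym2.Mem.other' h, ?_, (Sym2.other_spec' h).symm⟩
  intro hw
  apply G.not_loop f
  rw [← Sym2.other_spec' h, hw]
  exact Sym2.mk_isDiag_iff.mpr rfl

/-- Number of missing colors at `v` is at least `k` minus the degree. -/
lemma miss_count {F : Finset E} {excl : E} {k : ℕ} {φ : E → Fin k} (v : V) :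
    k - {f : E | v ∈ G.ends f}.ncard ≤
      (Finset.univ.filter (fun c => G.Miss F excl φ v c)).card := by
  set A : Finset E := Finset.univ.filter (fun f => f ∈ F ∧ f ≠ excl ∧ v ∈ G.ends f) with hA
  have hnotmiss : Finset.univ.filter (fun c => ¬ G.Miss F excl φ v c) ⊆ A.image φ := by
    intro c hc
    replace hc := (Finset.mem_filter.mp hc).2
    simp only [Miss] at hc
    push_neg at hc
    obtain ⟨f, hf, hfe, hvf, hfc⟩ := hc
    exact Finset.mem_image.mpr ⟨f, by simp [hA, hf, hfe, hvf], hfc⟩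
  have hAcard : A.card ≤ {f : E | v ∈ G.ends f}.ncard := by
    rw [Set.ncard_eq_toFinset_card']
    apply Finset.card_le_card
    intro f hf
    simp only [hA, Finset.mem_filter] at hf
    simp [Set.mem_toFinset, hf.2.2.2]
  have h1 : (Finset.univ.filter (fun c => ¬ G.Miss F excl φ v c)).card ≤
      {f : E | v ∈ G.ends f}.ncard :=
    le_trans (Finset.card_le_card hnotmiss) (le_trans Finset.card_image_le hAcard)
  have h2 := Finset.card_filter_add_card_filter_not
    (s := (Finset.univ : Finset (Fin k))) (p := fun c => G.Miss F excl φ v c)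
  have h3 : (Finset.univ : Finset (Fin k)).card = k := by simp
  set N := {f : E | v ∈ G.ends f}.ncard
  omega

/-- The α/β Kempe subgraph as a simple graph. -/
def kempe (G : Multigraph V E) (F : Finset E) (excl : E) {k : ℕ} (φ : E → Fin k)
    (α β : Fin k) : SimpleGraph V where
  Adj u v := ∃ f, f ∈ F ∧ f ≠ excl ∧ G.ends f = s(u, v) ∧ (φ f = α ∨ φ f = β)
  symm := by
    constructor
    rintro u v ⟨f, h1, h2, h3, h4⟩
    exact ⟨f, h1, h2, by rwa [Sym2.eq_swap], h4⟩
  loopless := by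
    constructor
    rintro u ⟨f, h1, h2, h3, h4⟩
    exact G.not_loop f (h3 ▸ Sym2.mk_isDiag_iff.mpr rfl)

lemma kempe_closure {F : Finset E} {excl : E} {k : ℕ} {φ : E → Fin k} {α β : Fin k}
    {u w : V} {f : E} (hf : f ∈ F) (hfe : f ≠ excl) (hc : φ f = α ∨ φ f = β)
    (hw : w ∈ G.ends f) (hr : (G.kempe F excl φ α β).Reachable u w) :
    ∀ w' ∈ G.ends f, (G.kempe F excl φ α β).Reachable u w' := by
  intro w' hw'
  obtain ⟨z, hz, hfz⟩ := ends_eq_of_mem (G := G) hw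
  rcases (Sym2.mem_iff.mp (hfz ▸ hw')) with h | h
  · exact h ▸ hr
  · subst h
    exact hr.trans (SimpleGraph.Adj.reachable ⟨f, hf, hfe, hfz, hc⟩)

/-- Properness of an edge coloring on `↑F \ {g}`, unfolded. -/
lemma proper_off_iff {F : Finset E} {g : E} {k : ℕ} {φ : E → Fin k} :
    G.IsProperColoringOn (↑F \ {g}) k φ ↔
      ∀ f₁ ∈ F, f₁ ≠ g → ∀ f₂ ∈ F, f₂ ≠ g → f₁ ≠ f₂ →
        (∃ v, v ∈ G.ends f₁ ∧ v ∈ G.ends f₂) → φ f₁ ≠ φ f₂ := by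
  constructor
  · intro h f₁ h1 h1g f₂ h2 h2g hne hsh
    exact h f₁ ⟨h1, h1g⟩ f₂ ⟨h2, h2g⟩ ⟨hne, hsh⟩
  · rintro h f₁ ⟨h1, h1g⟩ f₂ ⟨h2, h2g⟩ ⟨hne, hsh⟩
    exact h f₁ h1 h1g f₂ h2 h2g hne hsh

/-- Color the uncolored edge with a color missing at both endpoints. -/
lemma finish {F : Finset E} {g : E} {x v : V} (hg : g ∈ F) (hend : G.ends g = s(x, v))
    {k : ℕ} {φ : E → Fin k} {γ : Fin k} (hp : G.IsProperColoringOn (↑F \ {g}) k φ)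
    (hx : G.Miss F g φ x γ) (hv : G.Miss F g φ v γ) :
    ∃ ψ : E → Fin k, G.IsProperColoringOn (↑F) k ψ := by
  refine ⟨fun f => if f = g then γ else φ f, ?_⟩
  have key : ∀ f ∈ F, f ≠ g → (∃ w, w ∈ G.ends f ∧ w ∈ G.ends g) → φ f ≠ γ := by
    rintro f hf hfg ⟨w, hw1, hw2⟩
    rcases Sym2.mem_iff.mp (hend ▸ hw2) with h | h
    · exact hx f hf hfg (h ▸ hw1)
    · exact hv f hf hfg (h ▸ hw1)
  rintro f₁ hf₁ f₂ hf₂ ⟨hne, hsh⟩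
  simp only [Finset.mem_coe] at hf₁ hf₂
  by_cases h1 : f₁ = g <;> by_cases h2 : f₂ = g
  · exact absurd (h1.trans h2.symm) hne
  · subst h1
    simp only [if_pos rfl, if_neg h2]
    obtain ⟨w, hwa, hwb⟩ := hsh
    exact fun hc => key f₂ hf₂ h2 ⟨w, hwb, hwa⟩ hc.symm
  · subst h2
    simp only [if_pos rfl, if_neg h1]
    exact key f₁ hf₁ h1 hsh
  · simp only [if_neg h1, if_neg h2]
    exact (proper_off_iff.mp hp) f₁ hf₁ h1 f₂ hf₂ h2 hne hsh

/-- Kempe-chain swap at the component of `u₀`. -/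
lemma swap_lemma {F : Finset E} {g : E} {k : ℕ} {φ : E → Fin k} {α β : Fin k}
    (hαβ : α ≠ β) (u₀ : V) (hp : G.IsProperColoringOn (↑F \ {g}) k φ) :
    ∃ ψ : E → Fin k, G.IsProperColoringOn (↑F \ {g}) k ψ ∧
      (G.Miss F g φ u₀ β → G.Miss F g ψ u₀ α) ∧
      (∀ w, ¬ (G.kempe F g φ α β).Reachable u₀ w → ∀ c, G.Miss F g φ w c → G.Miss F g ψ w c) := by
  set S := G.kempe F g φ α β with hS
  set elig : E → Prop := fun f =>
    f ∈ F ∧ f ≠ g ∧ (φ f = α ∨ φ f = β) ∧ ∃ w ∈ G.ends f, S.Reachable u₀ w with helig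
  set sw : Fin k → Fin k := fun c => if c = α then β else if c = β then α else c with hsw
  refine ⟨fun f => if elig f then sw (φ f) else φ f, ?_, ?_, ?_⟩
  · -- properness
    have key : ∀ f₁ ∈ F, f₁ ≠ g → ∀ f₂ ∈ F, f₂ ≠ g → f₁ ≠ f₂ →
        (∃ w, w ∈ G.ends f₁ ∧ w ∈ G.ends f₂) →
        (if elig f₁ then sw (φ f₁) else φ f₁) ≠ (if elig f₂ then sw (φ f₂) else φ f₂) := by
      intro f₁ h1 h1g f₂ h2 h2g hne hsh
      have hcol := (proper_off_iff.mp hp) f₁ h1 h1g f₂ h2 h2g hne hsh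
      have cross : ∀ fa ∈ F, fa ≠ g → ∀ fb ∈ F, fb ≠ g →
          (∃ w, w ∈ G.ends fa ∧ w ∈ G.ends fb) → elig fa →
          (φ fb = α ∨ φ fb = β) → elig fb := by
        rintro fa ha hag fb hb hbg ⟨w, hw1, hw2⟩ ⟨_, _, hca, w', hw', hr⟩ hcb
        refine ⟨hb, hbg, hcb, w, hw2, ?_⟩
        exact kempe_closure ha hag hca hw' hr w hw1
      by_cases e1 : elig f₁ <;> by_cases e2 : elig f₂
      · rw [if_pos e1, if_pos e2]
        intro hc
        apply hcol
        simp only [hsw] at hc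
        split_ifs at hc <;> simp_all
      · rw [if_pos e1, if_neg e2]
        intro hc
        have hsww : sw (φ f₁) = α ∨ sw (φ f₁) = β := by
          rcases e1.2.2.1 with h | h <;> simp [hsw, h, hαβ]
        rw [hc] at hsww
        exact e2 (cross f₁ h1 h1g f₂ h2 h2g hsh e1 hsww)
      · rw [if_neg e1, if_pos e2]
        intro hc
        have hsww : sw (φ f₂) = α ∨ sw (φ f₂) = β := by
          rcases e2.2.2.1 with h | h <;> simp [hsw, h, hαβ]
        rw [← hc] at hsww
        obtain ⟨w, hw1, hw2⟩ := hsh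
        exact e1 (cross f₂ h2 h2g f₁ h1 h1g ⟨w, hw2, hw1⟩ e2 hsww)
      · rw [if_neg e1, if_neg e2]
        exact hcol
    rintro f₁ hf₁ f₂ hf₂ ⟨hne, hsh⟩
    simp only [Set.mem_diff, Finset.mem_coe, Set.mem_singleton_iff] at hf₁ hf₂
    exact key f₁ hf₁.1 hf₁.2 f₂ hf₂.1 hf₂.2 hne hsh
  · -- at u₀ : β missing before → α missing after
    intro hmβ f hf hfg hu
    by_cases he : elig f
    · have : φ f = α := by
        rcases he.2.2.1 with h | h
        · exact h
        · exact absurd h (hmβ f hf hfg hu)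
      show (if elig f then sw (φ f) else φ f) ≠ α
      rw [if_pos he, this]
      simp only [hsw, if_pos rfl]
      exact Ne.symm hαβ
    · have : φ f ≠ α := by
        intro hc
        exact he ⟨hf, hfg, Or.inl hc, u₀, hu, SimpleGraph.Reachable.refl u₀⟩
      simpa [if_neg he] using this
  · -- untouched vertices
    intro w hw c hmc f hf hfg hwf
    by_cases he : elig f
    · obtain ⟨_, _, hca, w', hw', hr⟩ := he
      exact absurd (kempe_closure hf hfg hca hw' hr w hwf) hw
    · simpa [if_neg he] using hmc f hf hfg hwf

/-- A connected graph of max degree two cannot have three distinct vertices of degree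
at most one. -/
lemma no_three_pendant (S : SimpleGraph V) [DecidableRel S.Adj] (x a b : V)
    (h2 : ∀ v, S.degree v ≤ 2) (hx : S.degree x ≤ 1) (ha : S.degree a ≤ 1)
    (hb : S.degree b ≤ 1) (hxa : x ≠ a) (hxb : x ≠ b) (hab : a ≠ b)
    (hcomp : ∀ v, S.degree v ≠ 0 → S.Reachable x v)
    (ra : S.Reachable x a) (rb : S.Reachable x b) : False := by
  classical
  set comp : Finset V := Finset.univ.filter (fun v => S.Reachable x v) with hcompdef
  have step1 : ∀ v ∈ comp.erase x, ∃ u, S.Adj v u ∧ S.dist u x < S.dist v x := by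
    intro v hv
    rw [Finset.mem_erase, hcompdef, Finset.mem_filter] at hv
    obtain ⟨hvx, _, hvr⟩ := hv
    obtain ⟨p, hp⟩ := hvr.symm.exists_walk_length_eq_dist
    cases p with
    | nil => exact absurd rfl hvx
    | cons h q =>
      refine ⟨_, h, ?_⟩
      have := SimpleGraph.dist_le q
      simp only [SimpleGraph.Walk.length_cons] at hp
      omega
  set f : V → Sym2 V := fun v =>
    if h : ∃ u, S.Adj v u ∧ S.dist u x < S.dist v x then s(v, h.choose) else s(v, v) with hf
  have hmaps : ∀ v ∈ comp.erase x, f v ∈ S.edgeFinset := by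
    intro v hv
    obtain ⟨u, hu⟩ := step1 v hv
    have hex : ∃ u, S.Adj v u ∧ S.dist u x < S.dist v x := ⟨u, hu⟩
    rw [hf]
    simp only [dif_pos hex]
    exact SimpleGraph.mem_edgeFinset.mpr hex.choose_spec.1
  have hinj : Set.InjOn f (comp.erase x) := by
    intro v hv w hw hvw
    by_contra hne
    obtain ⟨u1, hu1⟩ := step1 v hv
    obtain ⟨u2, hu2⟩ := step1 w hw
    have hex1 : ∃ u, S.Adj v u ∧ S.dist u x < S.dist v x := ⟨u1, hu1⟩
    have hex2 : ∃ u, S.Adj w u ∧ S.dist u x < S.dist w x := ⟨u2, hu2⟩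
    rw [hf] at hvw
    simp only [dif_pos hex1, dif_pos hex2] at hvw
    rcases Sym2.eq_iff.mp hvw with ⟨h1, h2⟩ | ⟨h1, h2⟩
    · exact hne h1
    · have c1 := hex1.choose_spec.2
      have c2 := hex2.choose_spec.2
      rw [h2] at c1
      rw [← h1] at c2
      omega
  have hcard : comp.card - 1 ≤ S.edgeFinset.card := by
    have := Finset.card_le_card_of_injOn f hmaps hinj
    have hxc : x ∈ comp := by simp [hcompdef, SimpleGraph.Reachable.refl]
    rw [Finset.card_erase_of_mem hxc] at this
    exact this
  have hsum : ∑ v, S.degree v = ∑ v ∈ comp, S.degree v := by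
    symm
    apply Finset.sum_subset (Finset.subset_univ comp)
    intro v _ hv
    by_contra hd
    exact hv (by simp [hcompdef, hcomp v hd])
  set T : Finset V := {x, a, b} with hT
  have hTsub : T ⊆ comp := by
    intro v hv
    simp only [hT, Finset.mem_insert, Finset.mem_singleton] at hv
    rcases hv with rfl | rfl | rfl <;> simp [hcompdef, ra, rb, SimpleGraph.Reachable.refl]
  have hTcard : T.card = 3 := by
    rw [hT]
    rw [Finset.card_insert_of_notMem (by simp [hxa, hxb]),
        Finset.card_insert_of_notMem (by simp [hab])]
    simp
  have hsplit : ∑ v ∈ comp \ T, S.degree v + ∑ v ∈ T, S.degree v = ∑ v ∈ comp, S.degree v :=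
    Finset.sum_sdiff hTsub
  have hTsum : ∑ v ∈ T, S.degree v ≤ 3 := by
    rw [hT, Finset.sum_insert (by simp [hxa, hxb]), Finset.sum_insert (by simp [hab]),
        Finset.sum_singleton]
    omega
  have hrest : ∑ v ∈ comp \ T, S.degree v ≤ 2 * (comp.card - 3) := by
    calc ∑ v ∈ comp \ T, S.degree v ≤ ∑ _v ∈ comp \ T, 2 :=
          Finset.sum_le_sum (fun v _ => h2 v)
      _ = 2 * (comp.card - 3) := by
          rw [Finset.sum_const, Finset.card_sdiff_of_subset hTsub, hTcard, smul_eq_mul, mul_comm]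
  have hcompcard : 3 ≤ comp.card := hTcard ▸ Finset.card_le_card hTsub
  have hhs := SimpleGraph.sum_degrees_eq_twice_card_edges S
  omega

lemma kempe_class_card {F : Finset E} {g : E} {k : ℕ} {φ : E → Fin k}
    (hp : G.IsProperColoringOn (↑F \ {g}) k φ) (v : V) (γ : Fin k) :
    (Finset.univ.filter
      (fun u => ∃ f, f ∈ F ∧ f ≠ g ∧ G.ends f = s(v, u) ∧ φ f = γ)).card ≤ 1 := by
  rw [Finset.card_le_one]
  intro u1 h1 u2 h2
  simp only [Finset.mem_filter, Finset.mem_univ, true_and] at h1 h2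
  obtain ⟨f1, hf1, hf1g, he1, hc1⟩ := h1
  obtain ⟨f2, hf2, hf2g, he2, hc2⟩ := h2
  by_cases hf : f1 = f2
  · subst hf
    rw [he1] at he2
    rcases Sym2.eq_iff.mp he2 with ⟨_, h⟩ | ⟨h, h'⟩
    · exact h
    · rw [← h, h']
  · exact absurd (hc1.trans hc2.symm)
      ((proper_off_iff.mp hp) f1 hf1 hf1g f2 hf2 hf2g hf
        ⟨v, he1 ▸ Sym2.mem_mk_left v u1, he2 ▸ Sym2.mem_mk_left v u2⟩)

lemma kempe_degree_le_two {F : Finset E} {g : E} {k : ℕ} {φ : E → Fin k} {α β : Fin k}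
    [DecidableRel (G.kempe F g φ α β).Adj]
    (hp : G.IsProperColoringOn (↑F \ {g}) k φ) (v : V) :
    (G.kempe F g φ α β).degree v ≤ 2 := by
  rw [← SimpleGraph.card_neighborFinset_eq_degree]
  have hsub : (G.kempe F g φ α β).neighborFinset v ⊆
      (Finset.univ.filter (fun u => ∃ f, f ∈ F ∧ f ≠ g ∧ G.ends f = s(v, u) ∧ φ f = α)) ∪
      (Finset.univ.filter (fun u => ∃ f, f ∈ F ∧ f ≠ g ∧ G.ends f = s(v, u) ∧ φ f = β)) := by
    intro u hu
    rw [SimpleGraph.mem_neighborFinset] at hu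
    obtain ⟨f, hf, hfg, he, hc⟩ := hu
    rcases hc with hc | hc
    · apply Finset.mem_union_left
      simp only [Finset.mem_filter, Finset.mem_univ, true_and]
      exact ⟨f, hf, hfg, he, hc⟩
    · apply Finset.mem_union_right
      simp only [Finset.mem_filter, Finset.mem_univ, true_and]
      exact ⟨f, hf, hfg, he, hc⟩
  calc ((G.kempe F g φ α β).neighborFinset v).card ≤ _ := Finset.card_le_card hsub
    _ ≤ 1 + 1 := le_trans (Finset.card_union_le _ _)
        (Nat.add_le_add (kempe_class_card hp v α) (kempe_class_card hp v β))
    _ = 2 := rfl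

lemma kempe_degree_le_one {F : Finset E} {g : E} {k : ℕ} {φ : E → Fin k} {α β : Fin k}
    [DecidableRel (G.kempe F g φ α β).Adj]
    (hp : G.IsProperColoringOn (↑F \ {g}) k φ) {v : V} {γ δ : Fin k}
    (hmiss : G.Miss F g φ v γ) (hor : ∀ c, (c = α ∨ c = β) → c ≠ γ → c = δ) :
    (G.kempe F g φ α β).degree v ≤ 1 := by
  rw [← SimpleGraph.card_neighborFinset_eq_degree]
  have hsub : (G.kempe F g φ α β).neighborFinset v ⊆
      (Finset.univ.filter (fun u => ∃ f, f ∈ F ∧ f ≠ g ∧ G.ends f = s(v, u) ∧ φ f = δ)) := by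
    intro u hu
    rw [SimpleGraph.mem_neighborFinset] at hu
    obtain ⟨f, hf, hfg, he, hc⟩ := hu
    have hvf : v ∈ G.ends f := he ▸ Sym2.mem_mk_left v u
    have hne : φ f ≠ γ := hmiss f hf hfg hvf
    simp only [Finset.mem_filter, Finset.mem_univ, true_and]
    exact ⟨f, hf, hfg, he, hor (φ f) hc hne⟩
  exact le_trans (Finset.card_le_card hsub) (kempe_class_card hp v δ)

/-- The key structural fact: if `α` is missing at `x` and `β` is missing at two other
distinct vertices `a` and `b`, then `x` cannot reach both `a` and `b` in the Kempe graph. -/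
lemma kempe_no_two {F : Finset E} {g : E} {k : ℕ} {φ : E → Fin k} {α β : Fin k}
    (hp : G.IsProperColoringOn (↑F \ {g}) k φ) {x a b : V}
    (hαβ : α ≠ β)
    (hxα : G.Miss F g φ x α) (haβ : G.Miss F g φ a β) (hbβ : G.Miss F g φ b β)
    (hxa : x ≠ a) (hxb : x ≠ b) (hab : a ≠ b)
    (ra : (G.kempe F g φ α β).Reachable x a) (rb : (G.kempe F g φ α β).Reachable x b) :
    False := by
  classical
  letI : DecidableRel (G.kempe F g φ α β).Adj := fun _ _ => Classical.dec _
  let S' : SimpleGraph V :=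
    { Adj := fun u w => (G.kempe F g φ α β).Adj u w ∧
        (G.kempe F g φ α β).Reachable x u ∧ (G.kempe F g φ α β).Reachable x w
      symm := by constructor; rintro u w ⟨h1, h2, h3⟩; exact ⟨h1.symm, h3, h2⟩
      loopless := by constructor; rintro u ⟨h1, _, _⟩; exact (G.kempe F g φ α β).loopless.irrefl u h1 }
  letI : DecidableRel S'.Adj := fun _ _ => Classical.dec _
  have transfer : ∀ u v : V, (G.kempe F g φ α β).Walk u v →
      (G.kempe F g φ α β).Reachable x u → S'.Reachable x u → S'.Reachable x v := by
    intro u v p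
    induction p with
    | nil => exact fun _ h => h
    | @cons u w v h q ih =>
      intro hr hr'
      have hadj : S'.Adj u w := ⟨h, hr, hr.trans h.reachable⟩
      exact ih (hr.trans h.reachable) (hr'.trans hadj.reachable)
  have transfer' : ∀ v : V, (G.kempe F g φ α β).Reachable x v → S'.Reachable x v := by
    intro v hv
    obtain ⟨p⟩ := hv
    exact transfer x v p (SimpleGraph.Reachable.refl x) (SimpleGraph.Reachable.refl x)
  have hdegle : ∀ v, S'.degree v ≤ (G.kempe F g φ α β).degree v := by
    intro v
    rw [← SimpleGraph.card_neighborFinset_eq_degree, ← SimpleGraph.card_neighborFinset_eq_degree]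
    apply Finset.card_le_card
    intro u hu
    rw [SimpleGraph.mem_neighborFinset] at hu ⊢
    exact hu.1
  refine no_three_pendant S' x a b ?_ ?_ ?_ ?_ hxa hxb hab ?_ (transfer' a ra) (transfer' b rb)
  · exact fun v => le_trans (hdegle v) (kempe_degree_le_two hp v)
  · exact le_trans (hdegle x) (kempe_degree_le_one hp hxα
      (fun c h hne => h.resolve_left hne))
  · exact le_trans (hdegle a) (kempe_degree_le_one hp haβ
      (fun c h hne => h.resolve_right hne))
  · exact le_trans (hdegle b) (kempe_degree_le_one hp hbβ
      (fun c h hne => h.resolve_right hne))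
  · intro v hv
    have : 0 < S'.degree v := Nat.pos_of_ne_zero hv
    rw [SimpleGraph.degree_pos_iff_exists_adj] at this
    obtain ⟨w, hw⟩ := this
    exact transfer' v hw.2.1

/-- The central extension lemma: a proper coloring of `F - e` can be modified to a
proper coloring of all of `F`, given `k ≥ Δ + μ` colors. -/
lemma extend {F : Finset E} {e : E} (he : e ∈ F) {k m : ℕ}
    (hm : ∀ a b : V, {h : E | G.ends h = s(a, b)}.ncard ≤ m)
    (hdeg : ∀ v : V, {f : E | v ∈ G.ends f}.ncard + m ≤ k)
    {φ : E → Fin k} (hp : G.IsProperColoringOn (↑F \ {e}) k φ) :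
    ∃ ψ : E → Fin k, G.IsProperColoringOn (↑F) k ψ := by
  classical
  -- the endpoints of e
  have hxe : (G.ends e).out.1 ∈ G.ends e := Sym2.out_fst_mem _
  set x : V := (G.ends e).out.1 with hxdef
  -- the "other endpoint" function
  set oth : E → V := fun f => if h : x ∈ G.ends f then (ends_eq_of_mem h).choose else x
    with hothdef
  have hoth : ∀ f, x ∈ G.ends f → oth f ≠ x ∧ G.ends f = s(x, oth f) := by
    intro f hf
    rw [hothdef]
    simp only [dif_pos hf]
    exact ⟨(ends_eq_of_mem hf).choose_spec.1, (ends_eq_of_mem hf).choose_spec.2⟩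
  -- missing colors are plentiful
  have hmisscard : ∀ v : V, m ≤ (Finset.univ.filter (fun c => G.Miss F e φ v c)).card := by
    intro v
    have h1 := miss_count (G := G) (F := F) (excl := e) (φ := φ) v
    have h2 := hdeg v
    omega
  have hm1 : 1 ≤ m := by
    have h1 := hm x (oth e)
    have h3 : 0 < {h : E | G.ends h = s(x, oth e)}.ncard :=
      (Set.ncard_pos (Set.toFinite _)).mpr ⟨e, (hoth e hxe).2⟩
    omega
  have hmiss_ex : ∀ v : V, ∃ c, G.Miss F e φ v c := by
    intro v
    have := lt_of_lt_of_le (by omega : 0 < m) (hmisscard v)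
    rw [Finset.card_pos] at this
    obtain ⟨c, hc⟩ := this
    exact ⟨c, (Finset.mem_filter.mp hc).2⟩
  obtain ⟨α, hxα⟩ := hmiss_ex x
  -- fans
  set IsFan : (ℕ → E) → ℕ → Prop := fun t s =>
    t 0 = e ∧ (∀ i, i ≤ s → x ∈ G.ends (t i) ∧ t i ∈ F) ∧
      (∀ i, i ≤ s → ∀ j, j ≤ s → t i = t j → i = j) ∧
      (∀ i, 1 ≤ i → i ≤ s → G.Miss F e φ (oth (t (i - 1))) (φ (t i))) with hFan
  set SS : Set ℕ := {s | ∃ t, IsFan t s} with hSS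
  have hSS0 : 0 ∈ SS := by
    refine ⟨fun _ => e, rfl, fun i hi => ⟨hxe, he⟩, ?_, ?_⟩
    · intro i hi j hj _
      omega
    · intro i h1 h2
      omega
  have hSSbdd : BddAbove SS := by
    refine ⟨Fintype.card E, ?_⟩
    rintro s ⟨t, ht⟩
    have hinj := ht.2.2.1
    have hcard : (Finset.range (s + 1)).card ≤ (Finset.univ : Finset E).card := by
      apply Finset.card_le_card_of_injOn t
      · intro i _
        exact Finset.mem_univ _
      · intro i hi j hj hij
        simp only [Finset.coe_range, Set.mem_Iio] at hi hj
        exact hinj i (by omega) j (by omega) hij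
    rw [Finset.card_range, Finset.card_univ] at hcard
    omega
  -- a maximal fan
  set s : ℕ := sSup SS with hsdef
  have hsmem : s ∈ SS := Nat.sSup_mem ⟨0, hSS0⟩ hSSbdd
  obtain ⟨t, ht0, htF, htinj, htmiss⟩ := hsmem
  have htne : ∀ i, 1 ≤ i → i ≤ s → t i ≠ e := by
    intro i h1 h2 hc
    have := htinj i h2 0 (by omega) (hc.trans ht0.symm)
    omega
  have hppo := proper_off_iff.mp hp
  -- distinct colored fan edges have distinct colors
  have hcinj : ∀ i, 1 ≤ i → i ≤ s → ∀ j, 1 ≤ j → j ≤ s → φ (t i) = φ (t j) → i = j := by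
    intro i hi1 hi2 j hj1 hj2 hc
    by_contra hne
    have htne' : t i ≠ t j := fun hh => hne (htinj i hi2 j hj2 hh)
    exact hppo (t i) (htF i hi2).2 (htne i hi1 hi2) (t j) (htF j hj2).2 (htne j hj1 hj2)
      htne' ⟨x, (htF i hi2).1, (htF j hj2).1⟩ hc
  have hαnotfan : ∀ i, 1 ≤ i → i ≤ s → φ (t i) ≠ α :=
    fun i h1 h2 => hxα (t i) (htF i h2).2 (htne i h1 h2) (htF i h2).1
  -- maximality of the fan
  have hmax : ∀ β, G.Miss F e φ (oth (t s)) β → ¬ G.Miss F e φ x β →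
      ∃ j, 1 ≤ j ∧ j ≤ s ∧ φ (t j) = β := by
    intro β hβz hβx
    rw [Miss] at hβx
    push_neg at hβx
    obtain ⟨f, hfF, hfe, hxf, hfβ⟩ := hβx
    by_cases hfan : ∃ j, j ≤ s ∧ t j = f
    · obtain ⟨j, hj, hjf⟩ := hfan
      have hj1 : 1 ≤ j := by
        rcases Nat.eq_zero_or_pos j with h | h
        · exact absurd (by rw [← hjf, h, ht0]) hfe
        · exact h
      exact ⟨j, hj1, hj, hjf ▸ hfβ⟩
    · exfalso
      push_neg at hfan
      have hnew : IsFan (fun i => if i = s + 1 then f else t i) (s + 1) := by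
        refine ⟨by simp [ht0], ?_, ?_, ?_⟩
        · intro i hi
          by_cases h : i = s + 1
          · simp [h, hxf, hfF]
          · simp only [if_neg h]
            exact htF i (by omega)
        · intro i hi j hj hij
          change (if i = s + 1 then f else t i) = (if j = s + 1 then f else t j) at hij
          by_cases h1 : i = s + 1 <;> by_cases h2 : j = s + 1
          · omega
          · rw [if_pos h1, if_neg h2] at hij
            exact absurd hij.symm (hfan j (by omega))
          · rw [if_neg h1, if_pos h2] at hij
            exact absurd hij (hfan i (by omega))
          · rw [if_neg h1, if_neg h2] at hij
            exact htinj i (by omega) j (by omega) hij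
        · intro i hi1 hi2
          show G.Miss F e φ (oth (if i - 1 = s + 1 then f else t (i - 1)))
            (φ (if i = s + 1 then f else t i))
          by_cases h : i = s + 1
          · rw [if_pos h, if_neg (by omega : ¬ (i - 1 = s + 1)), hfβ,
              show i - 1 = s by omega]
            exact hβz
          · rw [if_neg h, if_neg (by omega : ¬ (i - 1 = s + 1))]
            exact htmiss i hi1 (by omega)
      have hmem2 : s + 1 ∈ SS := ⟨fun i => if i = s + 1 then f else t i, hnew⟩
      have : s + 1 ≤ s := hsdef ▸ le_csSup hSSbdd hmem2
      omega
  -- the shifted colorings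
  set Φ : ℕ → E → Fin k := fun i f =>
    if h : ∃ r, r < i ∧ f = t r then φ (t (h.choose + 1)) else φ f with hΦdef
  have hΦ_shift : ∀ i, i ≤ s → ∀ r, r < i → Φ i (t r) = φ (t (r + 1)) := by
    intro i hi r hr
    have hex : ∃ r', r' < i ∧ t r = t r' := ⟨r, hr, rfl⟩
    rw [hΦdef]
    simp only [dif_pos hex]
    have hch := hex.choose_spec
    have hchr : hex.choose = r := htinj _ (by omega) r (by omega) hch.2.symm
    rw [hchr]
  have hΦ_other : ∀ i f, ¬ (∃ r, r < i ∧ f = t r) → Φ i f = φ f := by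
    intro i f hnf
    rw [hΦdef]
    simp only [dif_neg hnf]
  have hΦ_ne_e : ∀ i, i ≤ s → ∀ f, f ≠ t i → ¬ (∃ r, r < i ∧ f = t r) → f ≠ e := by
    intro i hi f hfi hnf hc
    rcases Nat.eq_zero_or_pos i with h0 | h0
    · exact hfi (by rw [hc, ← ht0, h0])
    · exact hnf ⟨0, h0, by rw [hc, ht0]⟩
  -- shifting preserves properness
  have hΦ_proper : ∀ i, i ≤ s → G.IsProperColoringOn (↑F \ {t i}) k (Φ i) := by
    intro i hi
    rw [proper_off_iff]
    have key : ∀ fa, fa ∈ F → fa ≠ t i → ∀ fb, fb ∈ F → fb ≠ t i → fa ≠ fb →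
        (∃ w, w ∈ G.ends fa ∧ w ∈ G.ends fb) →
        (∃ r, r < i ∧ fa = t r) → ¬ (∃ r, r < i ∧ fb = t r) → Φ i fa ≠ Φ i fb := by
      rintro fa haF hai fb hbF hbi hneab ⟨w, hwa, hwb⟩ ⟨r, hr, hfa⟩ hnb
      have hbe : fb ≠ e := hΦ_ne_e i hi fb hbi hnb
      rw [hfa, hΦ_shift i hi r hr, hΦ_other i fb hnb]
      have hr1s : r + 1 ≤ s := by omega
      have hbne : fb ≠ t (r + 1) := by
        intro hc
        rcases Nat.lt_or_ge (r + 1) i with h | h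
        · exact hnb ⟨r + 1, h, hc⟩
        · have hri : r + 1 = i := by omega
          exact hbi (by rw [hc, hri])
      have hwends : w ∈ G.ends (t r) := hfa ▸ hwa
      rw [(hoth _ (htF r (by omega)).1).2] at hwends
      rcases Sym2.mem_iff.mp hwends with hwx | hwo
      · subst hwx
        intro hc
        exact hppo (t (r + 1)) (htF _ hr1s).2 (htne _ (by omega) hr1s) fb hbF hbe
          (fun hh => hbne hh.symm) ⟨x, (htF _ hr1s).1, hwb⟩ hc
      · intro hc
        have hmr := htmiss (r + 1) (by omega) hr1s
        have hr1 : r + 1 - 1 = r := by omega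
        rw [hr1] at hmr
        exact hmr fb hbF hbe (hwo ▸ hwb) hc.symm
    intro f₁ h1 h1g f₂ h2 h2g hne hsh
    by_cases ha : ∃ r, r < i ∧ f₁ = t r <;> by_cases hb : ∃ r, r < i ∧ f₂ = t r
    · obtain ⟨r1, hr1, hf1⟩ := ha
      obtain ⟨r2, hr2, hf2⟩ := hb
      rw [hf1, hf2, hΦ_shift i hi r1 hr1, hΦ_shift i hi r2 hr2]
      intro hc
      have h12 : r1 + 1 = r2 + 1 :=
        hcinj _ (by omega) (by omega) _ (by omega) (by omega) hc
      exact hne (by rw [hf1, hf2, show r1 = r2 by omega])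
    · exact key f₁ h1 h1g f₂ h2 h2g hne hsh ha hb
    · obtain ⟨w, hw1, hw2⟩ := hsh
      exact fun hc => key f₂ h2 h2g f₁ h1 h1g hne.symm ⟨w, hw2, hw1⟩ hb ha hc.symm
    · rw [hΦ_other i f₁ ha, hΦ_other i f₂ hb]
      exact hppo f₁ h1 (hΦ_ne_e i hi f₁ h1g ha) f₂ h2 (hΦ_ne_e i hi f₂ h2g hb) hne hsh
  -- shifting preserves the missing colors at x
  have hΦ_missx : ∀ i, i ≤ s → ∀ c, G.Miss F e φ x c → G.Miss F (t i) (Φ i) x c := by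
    intro i hi c hmc f hfF hfti hxf
    by_cases hfan : ∃ r, r < i ∧ f = t r
    · obtain ⟨r, hr, hfr⟩ := hfan
      rw [hfr, hΦ_shift i hi r hr]
      exact hmc (t (r + 1)) (htF _ (by omega)).2 (htne _ (by omega) (by omega))
        (htF _ (by omega)).1
    · rw [hΦ_other i f hfan]
      exact hmc f hfF (hΦ_ne_e i hi f hfti hfan) hxf
  -- shifting preserves missing colors at other vertices, under a side condition
  have hΦ_missv : ∀ i, i ≤ s → ∀ v c, v ≠ x → G.Miss F e φ v c →
      (∀ r, r < i → v = oth (t r) → φ (t (r + 1)) ≠ c) → G.Miss F (t i) (Φ i) v c := by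
    intro i hi v c hvx hmc hside f hfF hfti hvf
    by_cases hfan : ∃ r, r < i ∧ f = t r
    · obtain ⟨r, hr, hfr⟩ := hfan
      rw [hfr, hΦ_shift i hi r hr]
      have hvends : v ∈ G.ends (t r) := hfr ▸ hvf
      rw [(hoth _ (htF r (by omega)).1).2] at hvends
      rcases Sym2.mem_iff.mp hvends with h | h
      · exact absurd h hvx
      · exact hside r hr h
    · rw [hΦ_other i f hfan]
      exact hmc f hfF (hΦ_ne_e i hi f hfti hfan) hvf
  -- the vertex at the end of the fan
  set z : V := oth (t s) with hzdef
  have hzx : z ≠ x := (hoth _ (htF s le_rfl).1).1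
  have hendz : G.ends (t s) = s(x, z) := (hoth _ (htF s le_rfl).1).2
  -- CASE A : some color is missing both at x and at the end of the fan
  by_cases hA : ∃ β, G.Miss F e φ z β ∧ G.Miss F e φ x β
  · obtain ⟨β, hβz, hβx⟩ := hA
    refine finish (htF s le_rfl).2 hendz (hΦ_proper s le_rfl)
      (hΦ_missx s le_rfl β hβx) ?_
    refine hΦ_missv s le_rfl z β hzx hβz ?_
    intro r hr _ hc
    exact hβx (t (r + 1)) (htF _ (by omega)).2 (htne _ (by omega) (by omega))
      (htF _ (by omega)).1 hc
  · -- no color is missing at both; get the counting situation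
    push_neg at hA
    by_cases hB : ∀ β, G.Miss F e φ z β → ∀ j, 1 ≤ j → j ≤ s → φ (t j) = β →
        oth (t (j - 1)) = z
    · -- too many parallel edges between x and z : contradiction
      exfalso
      set Mset : Finset (Fin k) := Finset.univ.filter (fun c => G.Miss F e φ z c) with hMdef
      set P : Finset E := Finset.univ.filter (fun h => G.ends h = s(x, z)) with hPdef
      have hJ : ∀ β ∈ Mset, ∃ j, 1 ≤ j ∧ j ≤ s ∧ φ (t j) = β := by
        intro β hβ
        rw [hMdef, Finset.mem_filter] at hβ
        exact hmax β hβ.2 (hA β hβ.2)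
      set g : Fin k → E := fun β =>
        if h : ∃ j, 1 ≤ j ∧ j ≤ s ∧ φ (t j) = β then t (h.choose - 1) else e with hgdef
      have hgmaps : ∀ β ∈ Mset, g β ∈ P.erase (t s) := by
        intro β hβ
        have hex := hJ β hβ
        rw [hgdef]
        simp only [dif_pos hex]
        obtain ⟨hj1, hjs, hjc⟩ := hex.choose_spec
        set j := hex.choose
        have hmem : x ∈ G.ends (t (j - 1)) := (htF (j - 1) (by omega)).1
        have hoz : oth (t (j - 1)) = z := by
          rw [hMdef, Finset.mem_filter] at hβ
          exact hB β hβ.2 j hj1 hjs hjc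
        rw [Finset.mem_erase]
        constructor
        · intro hc
          have : j - 1 = s := htinj _ (by omega) s le_rfl hc
          omega
        · rw [hPdef, Finset.mem_filter]
          exact ⟨Finset.mem_univ _, by rw [(hoth _ hmem).2, hoz]⟩
      have hginj : Set.InjOn g Mset := by
        intro β1 hβ1 β2 hβ2 hgeq
        by_contra hne
        have hex1 := hJ β1 (by simpa using hβ1)
        have hex2 := hJ β2 (by simpa using hβ2)
        rw [hgdef] at hgeq
        simp only [dif_pos hex1, dif_pos hex2] at hgeq
        obtain ⟨ha1, ha2, ha3⟩ := hex1.choose_spec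
        obtain ⟨hb1, hb2, hb3⟩ := hex2.choose_spec
        have hjne : hex1.choose ≠ hex2.choose := by
          intro hc
          exact hne (by rw [← ha3, ← hb3, hc])
        have := htinj _ (by omega : hex1.choose - 1 ≤ s) _ (by omega : hex2.choose - 1 ≤ s) hgeq
        omega
      have hMcard : Mset.card ≤ (P.erase (t s)).card :=
        Finset.card_le_card_of_injOn g hgmaps hginj
      have htsP : t s ∈ P := by
        rw [hPdef, Finset.mem_filter]
        exact ⟨Finset.mem_univ _, hendz⟩
      have hPcard : P.card ≤ m := by
        have h1 := hm x z
        have h2 : {h : E | G.ends h = s(x, z)}.ncard = P.card := by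
          rw [hPdef, Set.ncard_eq_toFinset_card']
          congr 1
          ext f
          simp [Set.mem_toFinset]
        omega
      have hMm : m ≤ Mset.card := hmisscard z
      rw [Finset.card_erase_of_mem htsP] at hMcard
      have hPpos : 0 < P.card := Finset.card_pos.mpr ⟨t s, htsP⟩
      omega
    · -- the good case : a fan edge with color β whose lower end differs from z
      push_neg at hB
      obtain ⟨β, hβz, j, hj1, hjs, hjβ, hjne⟩ := hB
      set u : V := oth (t (j - 1)) with hudef
      have hmemj : x ∈ G.ends (t (j - 1)) := (htF (j - 1) (by omega)).1
      have hux : u ≠ x := (hoth _ hmemj).1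
      have hendu : G.ends (t (j - 1)) = s(x, u) := (hoth _ hmemj).2
      have huz : u ≠ z := hjne
      have hβu : G.Miss F e φ u β := by
        have hmj := htmiss j hj1 hjs
        rw [← hjβ]
        exact hmj
      have hβx : ¬ G.Miss F e φ x β := hA β hβz
      have hαβ : α ≠ β := fun hc => hβx (hc ▸ hxα)
      -- the Kempe graph for the original coloring
      by_cases hreach : (G.kempe F e φ α β).Reachable x u
      · -- Option A : shift the whole fan, swap at z, color with α
        have hnreach : ¬ (G.kempe F e φ α β).Reachable x z := by
          intro hc
          exact kempe_no_two hp hαβ hxα hβu hβz hux.symm hzx.symm huz hreach hc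
        -- the Kempe graph of the shifted coloring only adds the edge x–u
        have hstep : ∀ p q, (G.kempe F (t s) (Φ s) α β).Adj p q →
            (G.kempe F e φ α β).Reachable x p → (G.kempe F e φ α β).Reachable x q := by
          rintro p q ⟨f, hfF, hfts, hends, hcol⟩ hrp
          by_cases hfan : ∃ r, r < s ∧ f = t r
          · obtain ⟨r, hr, hfr⟩ := hfan
            rw [hfr, hΦ_shift s le_rfl r hr] at hcol
            rcases hcol with hcol | hcol
            · exact absurd hcol (hαnotfan _ (by omega) (by omega))
            · have hrj : r + 1 = j := hcinj _ (by omega) (by omega) j hj1 hjs (hcol.trans hjβ.symm)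
              have hfju : G.ends f = s(x, u) := by
                rw [hfr, show r = j - 1 by omega]
                exact hendu
              rw [hends] at hfju
              rcases Sym2.eq_iff.mp hfju with ⟨hpx, hqu⟩ | ⟨hpu, hqx⟩
              · exact hqu ▸ hreach
              · subst hqx
                exact SimpleGraph.Reachable.refl _
          · have hfe : f ≠ e := hΦ_ne_e s le_rfl f hfts hfan
            rw [hΦ_other s f hfan] at hcol
            exact hrp.trans (SimpleGraph.Adj.reachable ⟨f, hfF, hfe, hends, hcol⟩)
        have hwalk : ∀ p q : V, (G.kempe F (t s) (Φ s) α β).Walk p q →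
            (G.kempe F e φ α β).Reachable x p → (G.kempe F e φ α β).Reachable x q := by
          intro p q w
          induction w with
          | nil => exact id
          | cons h w ih => exact fun hr => ih (hstep _ _ h hr)
        have hnr : ¬ (G.kempe F (t s) (Φ s) α β).Reachable z x := by
          intro hc
          obtain ⟨w⟩ := hc.symm
          exact hnreach (hwalk x z w (SimpleGraph.Reachable.refl x))
        -- missing colors after the shift
        have hmissxs : G.Miss F (t s) (Φ s) x α := hΦ_missx s le_rfl α hxα
        have hmisszs : G.Miss F (t s) (Φ s) z β := by
          refine hΦ_missv s le_rfl z β hzx hβz ?_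
          intro r hr hro hc
          have hrj : r + 1 = j := hcinj _ (by omega) (by omega) j hj1 hjs (hc.trans hjβ.symm)
          exact huz (by rw [hudef, show j - 1 = r by omega, ← hro])
        -- swap the component of z
        obtain ⟨ψ, hψp, hψK4, hψK3⟩ :=
          swap_lemma (G := G) (F := F) (g := t s) (φ := Φ s) hαβ z (hΦ_proper s le_rfl)
        exact finish (htF s le_rfl).2 hendz hψp (hψK3 x hnr α hmissxs) (hψK4 hmisszs)
      · -- Option B : shift the fan up to j - 1, swap at u, color with α
        have hler : (G.kempe F (t (j - 1)) (Φ (j - 1)) α β) ≤ (G.kempe F e φ α β) := by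
          rintro p q ⟨f, hfF, hftj, hends, hcol⟩
          by_cases hfan : ∃ r, r < j - 1 ∧ f = t r
          · exfalso
            obtain ⟨r, hr, hfr⟩ := hfan
            rw [hfr, hΦ_shift (j - 1) (by omega) r hr] at hcol
            rcases hcol with hcol | hcol
            · exact hαnotfan _ (by omega) (by omega) hcol
            · have hrj : r + 1 = j :=
                hcinj _ (by omega) (by omega) j hj1 hjs (hcol.trans hjβ.symm)
              omega
          · have hfe : f ≠ e := hΦ_ne_e (j - 1) (by omega) f hftj hfan
            rw [hΦ_other (j - 1) f hfan] at hcol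
            exact ⟨f, hfF, hfe, hends, hcol⟩
        have hnr : ¬ (G.kempe F (t (j - 1)) (Φ (j - 1)) α β).Reachable u x := by
          intro hc
          exact hreach ((hc.mono hler).symm)
        have hmissxj : G.Miss F (t (j - 1)) (Φ (j - 1)) x α := hΦ_missx (j - 1) (by omega) α hxα
        have hmissuj : G.Miss F (t (j - 1)) (Φ (j - 1)) u β := by
          refine hΦ_missv (j - 1) (by omega) u β hux hβu ?_
          intro r hr _ hc
          have hrj : r + 1 = j := hcinj _ (by omega) (by omega) j hj1 hjs (hc.trans hjβ.symm)
          omega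
        obtain ⟨ψ, hψp, hψK4, hψK3⟩ :=
          swap_lemma (G := G) (F := F) (g := t (j - 1)) (φ := Φ (j - 1)) hαβ u
            (hΦ_proper (j - 1) (by omega))
        exact finish (htF (j - 1) (by omega)).2 hendu hψp (hψK3 x hnr α hmissxj) (hψK4 hmissuj)

lemma colorable {m k : ℕ}
    (hm : ∀ a b : V, {h : E | G.ends h = s(a, b)}.ncard ≤ m)
    (hdeg : ∀ v : V, {f : E | v ∈ G.ends f}.ncard + m ≤ k) :
    ∀ F : Finset E, ∃ φ : E → Fin k, G.IsProperColoringOn (↑F) k φ := by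
  classical
  rcases isEmpty_or_nonempty E with hE | hE
  · exact fun F => ⟨isEmptyElim, fun f hf => isEmptyElim f⟩
  · obtain ⟨e₀⟩ := hE
    have hk1 : 1 ≤ k := by
      have hv := hdeg (G.ends e₀).out.1
      have hpos : 0 < {f : E | (G.ends e₀).out.1 ∈ G.ends f}.ncard :=
        (Set.ncard_pos (Set.toFinite _)).mpr ⟨e₀, Sym2.out_fst_mem _⟩
      omega
    intro F
    induction F using Finset.strongInduction with
    | _ F ih =>
      rcases Finset.eq_empty_or_nonempty F with rfl | ⟨e, he⟩
      · exact ⟨fun _ => ⟨0, hk1⟩, fun f hf => absurd hf (by simp)⟩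
      · obtain ⟨φ, hφ⟩ := ih (F.erase e) (Finset.erase_ssubset he)
        have hφ' : G.IsProperColoringOn (↑F \ {e}) k φ := by
          rwa [Finset.coe_erase] at hφ
        exact extend he hm hdeg hφ'

end Multigraph

end VizingAux

open Multigraph in
/-- `Δ(G) ≤ χ'(G) ≤ Δ(G) + μ(G)` for every multigraph `G`. -/
theorem maxDegree_le_chromaticIndex_le_add_multiplicity
    {V E : Type*} [Fintype V] [Fintype E] (G : Multigraph V E) :
    G.maxDegree ≤ G.chromaticIndex ∧ G.chromaticIndex ≤ G.maxDegree + G.multiplicity := by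
  classical
  have hbddDeg : BddAbove (Set.range G.degree) := by
    refine ⟨Fintype.card E, ?_⟩
    rintro d ⟨v, rfl⟩
    calc G.degree v ≤ (Set.univ : Set E).ncard :=
          Set.ncard_le_ncard (Set.subset_univ _) (Set.toFinite _)
      _ = Fintype.card E := by rw [Set.ncard_univ, Nat.card_eq_fintype_card]
  have hbddMul : BddAbove (Set.range (fun p : V × V => {e : E | G.ends e = s(p.1, p.2)}.ncard)) := by
    refine ⟨Fintype.card E, ?_⟩
    rintro d ⟨p, rfl⟩
    calc {e : E | G.ends e = s(p.1, p.2)}.ncard ≤ (Set.univ : Set E).ncard :=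
          Set.ncard_le_ncard (Set.subset_univ _) (Set.toFinite _)
      _ = Fintype.card E := by rw [Set.ncard_univ, Nat.card_eq_fintype_card]
  have hSne : {k | ∃ φ : E → Fin k, G.IsProperColoringOn Set.univ k φ}.Nonempty := by
    refine ⟨Fintype.card E, Fintype.equivFin E, ?_⟩
    rintro f _ g _ ⟨hne, _⟩
    exact fun hc => hne ((Fintype.equivFin E).injective hc)
  constructor
  · -- lower bound
    apply csSup_le'
    rintro d ⟨v, rfl⟩
    obtain ⟨φ, hφ⟩ := Nat.sInf_mem hSne
    have hinj : Set.InjOn φ {e : E | v ∈ G.ends e} := by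
      intro f hf g hg hfg
      by_contra hne
      exact hφ f (Set.mem_univ f) g (Set.mem_univ g) ⟨hne, v, hf, hg⟩ hfg
    calc G.degree v = (φ '' {e : E | v ∈ G.ends e}).ncard :=
          (Set.ncard_image_of_injOn hinj).symm
      _ ≤ (Set.univ : Set (Fin (sInf {k | ∃ φ : E → Fin k, G.IsProperColoringOn Set.univ k φ}))).ncard :=
          Set.ncard_le_ncard (Set.subset_univ _) (Set.toFinite _)
      _ = sInf {k | ∃ φ : E → Fin k, G.IsProperColoringOn Set.univ k φ} := by
          rw [Set.ncard_univ, Nat.card_eq_fintype_card, Fintype.card_fin]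
      _ = G.chromaticIndex := rfl
  · -- upper bound
    have hmul : ∀ a b : V, {h : E | G.ends h = s(a, b)}.ncard ≤ G.multiplicity :=
      fun a b => le_csSup hbddMul ⟨(a, b), rfl⟩
    have hdeg : ∀ v : V, {f : E | v ∈ G.ends f}.ncard + G.multiplicity ≤
        G.maxDegree + G.multiplicity :=
      fun v => Nat.add_le_add_right (le_csSup hbddDeg ⟨v, rfl⟩) _
    obtain ⟨φ, hφ⟩ := Multigraph.colorable (G := G) hmul hdeg Finset.univ
    apply Nat.sInf_le
    exact ⟨φ, by simpa using hφ⟩
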